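/- Let R be a commutative Noetherian ring, S = R[x] a polynomial ring in one variable, and M an R-module. Then the associated primes of M ⊗_R S as an S-module are exactly the extensions P·S of associated primes P of M; in particular, if Q ∈ Ass_S(M ⊗_R S), then P := Q ∩ R ∈ Ass_R(M) and Q = P·S. -/

import Mathlib

open TensorProduct Polynomial

section Aux

variable (R : Type*) [CommRing R] (M : Type*) [AddCommGroup M] [Module R M]

noncomputable def fwd : Polynomial R ⊗[R] M →ₗ[R] PolynomialModule R M :=
  TensorProduct.lift
    { toFun := fun p => p • (PolynomialModule.lsingle R 0 : M →ₗ[R] PolynomialModule R M)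
      map_add' := fun p q => add_smul p q _
      map_smul' := fun r p => smul_assoc r p _ }

@[simp] lemma fwd_tmul (p : Polynomial R) (m : M) :
    fwd R M (p ⊗ₜ m) = p • PolynomialModule.single R 0 m := rfl

noncomputable def bwd : PolynomialModule R M →ₗ[R] Polynomial R ⊗[R] M :=
  Finsupp.lsum R (fun i => TensorProduct.mk R (Polynomial R) M (X ^ i)) ∘ₗ
    (PolynomialModule.coeffLinearEquiv R R).toLinearMap

@[simp] lemma bwd_single (i : ℕ) (m : M) :
    bwd R M (PolynomialModule.single R i m) = (X ^ i : Polynomial R) ⊗ₜ m := by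
  show (Finsupp.lsum R fun i => TensorProduct.mk R (Polynomial R) M (X ^ i))
      (Finsupp.single i m) = _
  rw [Finsupp.lsum_single]
  rfl

lemma fwd_poly_smul (q : Polynomial R) (t : Polynomial R ⊗[R] M) :
    fwd R M (q • t) = q • fwd R M t := by
  induction t with
  | zero => simp
  | add a b ha hb => rw [smul_add, map_add, map_add, ha, hb, smul_add]
  | tmul p m => rw [smul_tmul', fwd_tmul, fwd_tmul, smul_eq_mul, mul_smul]

lemma bwd_fwd (t : Polynomial R ⊗[R] M) : bwd R M (fwd R M t) = t := by
  induction t with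
  | zero => simp
  | add a b ha hb => simp [ha, hb]
  | tmul p m =>
    rw [fwd_tmul]
    induction p using Polynomial.induction_on' with
    | add p q hp hq => rw [add_smul, map_add, hp, hq, ← add_tmul]
    | monomial n r =>
      rw [PolynomialModule.monomial_smul_single, add_zero, bwd_single, ← smul_tmul]
      congr 1
      rw [Polynomial.smul_eq_C_mul, Polynomial.C_mul_X_pow_eq_monomial]

lemma fwd_bwd (g : PolynomialModule R M) : fwd R M (bwd R M g) = g := by
  induction g using PolynomialModule.induction_linear with
  | zero => simp
  | add a b ha hb => simp [ha, hb]
  | single i m =>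
    rw [bwd_single, fwd_tmul, Polynomial.X_pow_eq_monomial,
      PolynomialModule.monomial_smul_single, add_zero, one_smul]

noncomputable def tensorEquivPolyMod :
    Polynomial R ⊗[R] M ≃ₗ[Polynomial R] PolynomialModule R M :=
  { (LinearEquiv.ofLinear (fwd R M) (bwd R M)
      (LinearMap.ext (fwd_bwd R M)) (LinearMap.ext (bwd_fwd R M)) :
        Polynomial R ⊗[R] M ≃ₗ[R] PolynomialModule R M) with
    map_smul' := fun q t => fwd_poly_smul R M q t }

variable {R M}

lemma colon_bot_eq {A N : Type*} [CommRing A] [AddCommGroup N] [Module A N] (x : N) :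
    (⊥ : Submodule A N).colon {x} = (Submodule.span A {x}).annihilator := by
  ext r
  rw [Submodule.mem_colon_singleton, Submodule.mem_bot, Submodule.mem_annihilator_span_singleton]

lemma assoc_map [IsNoetherianRing R] {P : Ideal R} (h : IsAssociatedPrime P M) :
    IsAssociatedPrime (P.map (C : R →+* Polynomial R)) (PolynomialModule R M) := by
  obtain ⟨hP, m, hm⟩ := isAssociatedPrime_iff.mp h
  rw [colon_bot_eq] at hm
  refine isAssociatedPrime_iff.mpr
    ⟨(by haveI := hP; exact Ideal.isPrime_map_C_of_isPrime), PolynomialModule.single R 0 m, ?_⟩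
  rw [colon_bot_eq]
  ext q
  rw [Ideal.mem_map_C_iff, Submodule.mem_annihilator_span_singleton]
  have hmem : ∀ a : R, a ∈ P ↔ a • m = 0 := fun a => by
    rw [hm, Submodule.mem_annihilator_span_singleton]
  constructor
  · intro h
    refine PolynomialModule.coeff_injective (Finsupp.ext fun k => ?_)
    rw [PolynomialModule.smul_single_apply, PolynomialModule.coeff_zero, Finsupp.zero_apply]
    simp only [Nat.zero_le, if_true, tsub_zero]
    exact (hmem _).mp (h k)
  · intro h k
    rw [hmem]
    have := congrArg (fun (g : PolynomialModule R M) => g.coeff k) h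
    simpa [PolynomialModule.smul_single_apply] using this

lemma top_coeff_smul (q : Polynomial R) (f : PolynomialModule R M) (n : ℕ)
    (hfd : ∀ k, n < k → f.coeff k = 0) :
    (q • f).coeff (q.natDegree + n) = q.leadingCoeff • f.coeff n := by
  rw [PolynomialModule.smul_apply]
  rw [Finset.sum_eq_single (q.natDegree, n)]
  · rfl
  · rintro ⟨i, j⟩ hij hne
    rw [Finset.HasAntidiagonal.mem_antidiagonal] at hij
    rcases lt_or_ge q.natDegree i with h | h
    · rw [Polynomial.coeff_eq_zero_of_natDegree_lt h, zero_smul]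
    · have : n < j := by
        rcases lt_or_ge n j with h' | h'
        · exact h'
        · exfalso; apply hne
          have : i = q.natDegree ∧ j = n := by omega
          simp [this.1, this.2]
      rw [hfd j this, smul_zero]
  · intro h
    exact absurd (Finset.HasAntidiagonal.mem_antidiagonal.mpr (rfl : q.natDegree + n = q.natDegree + n)) h


lemma C_smul_poly (a : R) (f : PolynomialModule R M) : (C a) • f = a • f := by
  rw [Polynomial.C_eq_algebraMap, algebraMap_smul]

lemma smul_apply' (a : R) (f : PolynomialModule R M) (k : ℕ) : (a • f).coeff k = a • f.coeff k := rfl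

lemma lead_mem (Q : Ideal (Polynomial R)) (hQ : Q.IsPrime) :
    ∀ (n : ℕ) (f : PolynomialModule R M), (∀ k, n < k → f.coeff k = 0) →
      Q = (Submodule.span (Polynomial R) {f}).annihilator →
      ∀ q ∈ Q, C q.leadingCoeff ∈ Q := by
  intro n
  induction n with
  | zero =>
    intro f hfd hann q hq
    by_contra hC
    have hsmul : ∀ p ∈ Q, p • f = 0 := fun p hp => by
      rw [hann, Submodule.mem_annihilator_span_singleton] at hp; exact hp
    have htop : q.leadingCoeff • f.coeff 0 = 0 := by
      rw [← top_coeff_smul q f 0 hfd, hsmul q hq]; rfl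
    have hf0 : q.leadingCoeff • f = 0 := by
      refine PolynomialModule.coeff_injective (Finsupp.ext fun k => ?_)
      rcases Nat.eq_zero_or_pos k with rfl | hk
      · exact htop
      · rw [smul_apply', hfd k hk, smul_zero]; rfl
    exact hC (by rw [hann, Submodule.mem_annihilator_span_singleton, C_smul_poly]; exact hf0)
  | succ n ih =>
    intro f hfd hann q hq
    by_contra hC
    have hsmul : ∀ p ∈ Q, p • f = 0 := fun p hp => by
      rw [hann, Submodule.mem_annihilator_span_singleton] at hp; exact hp
    set g : PolynomialModule R M := q.leadingCoeff • f with hg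
    have htop : g.coeff (n + 1) = 0 := by
      show q.leadingCoeff • f.coeff (n + 1) = 0
      rw [← top_coeff_smul q f (n + 1) hfd, hsmul q hq]; rfl
    have hgd : ∀ k, n < k → g.coeff k = 0 := by
      intro k hk
      rcases Nat.lt_or_ge k (n + 2) with h | h
      · have : k = n + 1 := by omega
        rw [this]; exact htop
      · rw [hg, smul_apply', hfd k (by omega), smul_zero]
    have hCa : C q.leadingCoeff ∉ Q := hC
    have hganm : Q = (Submodule.span (Polynomial R) {g}).annihilator := by
      refine le_antisymm ?_ ?_
      · intro p hp
        rw [Submodule.mem_annihilator_span_singleton, hg, ← C_smul_poly, smul_comm,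
          hsmul p hp, smul_zero]
      · intro p hp
        rw [Submodule.mem_annihilator_span_singleton, hg, ← C_smul_poly, ← mul_smul] at hp
        have : p * C q.leadingCoeff ∈ Q := by
          rw [hann, Submodule.mem_annihilator_span_singleton]; exact hp
        rcases hQ.mem_or_mem this with h | h
        · exact h
        · exact absurd h hCa
    exact hC (ih g hgd hganm q hq)

lemma coeff_mem (Q : Ideal (Polynomial R)) (hQ : Q.IsPrime) (f : PolynomialModule R M)
    (hann : Q = (Submodule.span (Polynomial R) {f}).annihilator) :
    ∀ q ∈ Q, ∀ j, C (q.coeff j) ∈ Q := by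
  have hfd : ∀ k, f.coeff.support.sup id < k → f.coeff k = 0 := by
    intro k hk
    by_contra h
    have : k ∈ f.coeff.support := Finsupp.mem_support_iff.mpr h
    exact absurd (Finset.le_sup (f := id) this) (not_le.mpr hk)
  have lead : ∀ q ∈ Q, C q.leadingCoeff ∈ Q :=
    lead_mem Q hQ (f.coeff.support.sup id) f hfd hann
  suffices H : ∀ n q, q ∈ Q → q.natDegree ≤ n → ∀ j, C (q.coeff j) ∈ Q by
    intro q hq j; exact H q.natDegree q hq le_rfl j
  intro n
  induction n with
  | zero =>
    intro q hq hdeg j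
    rcases Nat.eq_zero_or_pos j with rfl | hj
    · rwa [← Polynomial.eq_C_of_natDegree_eq_zero (Nat.le_zero.mp hdeg)]
    · rw [Polynomial.coeff_eq_zero_of_natDegree_lt (lt_of_le_of_lt hdeg hj), map_zero]
      exact Q.zero_mem
  | succ n ih =>
    intro q hq hdeg j
    rcases Nat.lt_or_ge q.natDegree 1 with h1 | h1
    · rcases Nat.eq_zero_or_pos j with rfl | hj
      · rwa [← Polynomial.eq_C_of_natDegree_eq_zero (Nat.lt_one_iff.mp h1)]
      · rw [Polynomial.coeff_eq_zero_of_natDegree_lt (lt_of_lt_of_le h1 hj), map_zero]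
        exact Q.zero_mem
    · have hlead := lead q hq
      have herase : q.eraseLead ∈ Q := by
        have : q.eraseLead = q - C q.leadingCoeff * X ^ q.natDegree := by
          rw [eq_sub_iff_add_eq, Polynomial.eraseLead_add_C_mul_X_pow]
        rw [this]
        exact Q.sub_mem hq (Q.mul_mem_right _ hlead)
      rcases eq_or_ne j q.natDegree with rfl | hj
      · exact hlead
      · rw [← Polynomial.eraseLead_coeff_of_ne j hj]
        exact ih q.eraseLead herase
          (by
            have := Polynomial.eraseLead_natDegree_le q
            omega) j

lemma contract [IsNoetherianRing R] (Q : Ideal (Polynomial R)) (h : IsAssociatedPrime Q (PolynomialModule R M)) :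
    IsAssociatedPrime (Q.comap (C : R →+* Polynomial R)) M ∧
      Q = (Q.comap (C : R →+* Polynomial R)).map (C : R →+* Polynomial R) := by
  obtain ⟨hQ, f, hann⟩ := isAssociatedPrime_iff.mp h
  rw [colon_bot_eq] at hann
  have hf : f ≠ 0 := by
    rintro rfl
    have : (1 : Polynomial R) ∈ Q := by
      rw [hann, Submodule.mem_annihilator_span_singleton]; simp
    exact hQ.ne_top (Q.eq_top_of_isUnit_mem this isUnit_one)
  have hcoeff := coeff_mem Q hQ f hann
  have hmapQ : Q = (Q.comap (C : R →+* Polynomial R)).map (C : R →+* Polynomial R) := by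
    refine le_antisymm ?_ Ideal.map_comap_le
    intro q hq
    rw [Ideal.mem_map_C_iff]
    exact fun k => Ideal.mem_comap.mpr (hcoeff q hq k)
  refine ⟨?_, hmapQ⟩
  set P := Q.comap (C : R →+* Polynomial R) with hP
  haveI := hQ
  have hPprime : P.IsPrime := Ideal.IsPrime.comap _
  have hPmem : ∀ a : R, a ∈ P ↔ a • f = 0 := fun a => by
    rw [hP, Ideal.mem_comap, hann, Submodule.mem_annihilator_span_singleton, C_smul_poly]
  have hsub : ∀ i ∈ f.coeff.support, P ≤ (Submodule.span R {f.coeff i}).annihilator := by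
    intro i _ a ha
    rw [Submodule.mem_annihilator_span_singleton]
    have h0 := (hPmem a).mp ha
    calc a • f.coeff i = (a • f).coeff i := rfl
      _ = 0 := by rw [h0]; rfl
  have hprod : (∏ i ∈ f.coeff.support, (Submodule.span R {f.coeff i}).annihilator) ≤ P := by
    intro a ha
    rw [hPmem]
    refine PolynomialModule.coeff_injective (Finsupp.ext fun k => ?_)
    show a • f.coeff k = 0
    by_cases hk : k ∈ f.coeff.support
    · have hak : a ∈ (Submodule.span R {f.coeff k}).annihilator :=
        (Ideal.prod_le_inf.trans (Finset.inf_le hk)) ha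
      rwa [Submodule.mem_annihilator_span_singleton] at hak
    · rw [Finsupp.notMem_support_iff.mp hk, smul_zero]
  obtain ⟨i, hi, hle⟩ := hPprime.prod_le.mp hprod
  exact isAssociatedPrime_iff.mpr
    ⟨hPprime, f.coeff i, by rw [colon_bot_eq]; exact le_antisymm (hsub i hi) hle⟩

end Aux

/-- For a Noetherian ring `R`, `S = R[x]` and a finitely generated `R`-module `M`, the
associated primes of `M ⊗_R S` over `S` are exactly the extensions `P·S` of the
associated primes `P` of `M`; moreover any `Q ∈ Ass_S(M ⊗_R S)` contracts to an
associated prime of `M` and equals its extension. -/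
theorem stmt_2 (R : Type*) [CommRing R] [IsNoetherianRing R]
    (M : Type*) [AddCommGroup M] [Module R M] [Module.Finite R M] :
    associatedPrimes (Polynomial R) (Polynomial R ⊗[R] M) =
      (fun P : Ideal R => P.map (algebraMap R (Polynomial R))) '' associatedPrimes R M ∧
    ∀ Q ∈ associatedPrimes (Polynomial R) (Polynomial R ⊗[R] M),
      Q.comap (algebraMap R (Polynomial R)) ∈ associatedPrimes R M ∧
      Q = (Q.comap (algebraMap R (Polynomial R))).map (algebraMap R (Polynomial R)) := by
  have heq : associatedPrimes (Polynomial R) (Polynomial R ⊗[R] M)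
      = associatedPrimes (Polynomial R) (PolynomialModule R M) :=
    LinearEquiv.AssociatedPrimes.eq (tensorEquivPolyMod R M)
  have halg : algebraMap R (Polynomial R) = (C : R →+* Polynomial R) :=
    Polynomial.algebraMap_eq
  constructor
  · rw [heq]
    ext Q
    simp only [Set.mem_image, halg]
    constructor
    · intro hQ
      obtain ⟨h1, h2⟩ := contract Q hQ
      exact ⟨Q.comap (C : R →+* Polynomial R), h1, h2.symm⟩
    · rintro ⟨P, hP, rfl⟩
      exact assoc_map hP
  · intro Q hQ
    rw [heq] at hQ
    rw [halg]
    exact contract Q hQ
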